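/- Let m ∈ ℕ, A ⊆ ℕ^m be a complete set of multi-indices, and let P_A be nodes generated per the essential assumptions. Then the set of multivariate Newton polynomials {N_α}_{α∈A} is a basis of the polynomial space Π_A. -/

import Mathlib

open MvPolynomial
open scoped Classical

set_option maxHeartbeats 1000000

noncomputable section

/-- The polynomial space `Π_A` spanned by the monomials `x^α`, `α ∈ A`. -/
def PiA (m : ℕ) (A : Finset (Fin m → ℕ)) : Submodule ℝ (MvPolynomial (Fin m) ℝ) :=
  Submodule.span ℝ ((fun α : Fin m → ℕ => ∏ i, X i ^ α i) '' ↑A)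

/-- `A ⊆ ℕ^m` is a complete (downward closed) set of multi-indices. -/
def CompleteIdx {m : ℕ} (A : Finset (Fin m → ℕ)) : Prop :=
  ∀ α ∈ A, ∀ β : Fin m → ℕ, (∀ i, β i ≤ α i) → β ∈ A

/-- The node `p_α = (p_{α₁,1},…,p_{α_m,m})` generated from generating nodes `p`. -/
def node {m : ℕ} (p : Fin m → ℕ → ℝ) (α : Fin m → ℕ) : Fin m → ℝ := fun i => p i (α i)

/-- The generating nodes `p_{0,i},…,p_{n_i,i}`, `n_i = max_{α∈A} α_i`, are pairwise
distinct in each dimension `i` (essential assumptions, Definition 2.8). -/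
def GenDistinct {m : ℕ} (A : Finset (Fin m → ℕ)) (p : Fin m → ℕ → ℝ) : Prop :=
  ∀ i : Fin m, ∀ j k : ℕ, j ≤ A.sup (fun α => α i) → k ≤ A.sup (fun α => α i) →
    p i j = p i k → j = k

/-- The multivariate Newton polynomial `N_α(x) = ∏_i ∏_{j<α_i} (x_i - p_{j,i})`. -/
def newton {m : ℕ} (p : Fin m → ℕ → ℝ) (α : Fin m → ℕ) : MvPolynomial (Fin m) ℝ :=
  ∏ i, ∏ j ∈ Finset.range (α i), (X i - C (p i j))

/-- `P` is unisolvent with respect to the polynomial subspace `W`: the only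
polynomial in `W` vanishing on all of `P` is `0`. -/
def Unisolvent {m : ℕ} (P : Set (Fin m → ℝ)) (W : Submodule ℝ (MvPolynomial (Fin m) ℝ)) :
    Prop :=
  ∀ Q ∈ W, (∀ x ∈ P, eval x Q = 0) → Q = 0

namespace NewtonAux

variable {m : ℕ}

/-- `toF α` is `α` as a finitely supported function. -/
def toF (α : Fin m → ℕ) : Fin m →₀ ℕ := Finsupp.equivFunOnFinite.symm α

@[simp] lemma toF_apply (α : Fin m → ℕ) (i : Fin m) : toF α i = α i := rfl

/-- The polynomial `f` has all exponents bounded by `d`. -/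
def Bdd (f : MvPolynomial (Fin m) ℝ) (d : Fin m →₀ ℕ) : Prop :=
  ∀ β : Fin m →₀ ℕ, coeff β f ≠ 0 → ∀ i, β i ≤ d i

lemma bdd_mul {f g : MvPolynomial (Fin m) ℝ} {d e : Fin m →₀ ℕ}
    (hf : Bdd f d) (hg : Bdd g e) : Bdd (f * g) (d + e) := by
  intro β h i
  rw [coeff_mul] at h
  obtain ⟨x, hx, hne⟩ := Finset.exists_ne_zero_of_sum_ne_zero h
  rw [Finset.HasAntidiagonal.mem_antidiagonal] at hx
  rcases mul_ne_zero_iff.mp hne with ⟨h1, h2⟩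
  have : β i = x.1 i + x.2 i := by rw [← hx]; simp
  rw [this, Finsupp.add_apply]
  exact add_le_add (hf _ h1 i) (hg _ h2 i)

lemma coeff_mul_bdd {f g : MvPolynomial (Fin m) ℝ} {d e : Fin m →₀ ℕ}
    (hf : Bdd f d) (hg : Bdd g e) :
    coeff (d + e) (f * g) = coeff d f * coeff e g := by
  rw [coeff_mul]
  refine Finset.sum_eq_single_of_mem (d, e) (Finset.HasAntidiagonal.mem_antidiagonal.mpr rfl) ?_
  intro x hx hne
  rw [Finset.HasAntidiagonal.mem_antidiagonal] at hx
  by_contra hz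
  rcases mul_ne_zero_iff.mp hz with ⟨h1, h2⟩
  apply hne
  have key : ∀ i, x.1 i = d i ∧ x.2 i = e i := by
    intro i
    have h3 : x.1 i + x.2 i = d i + e i := by
      rw [← Finsupp.add_apply, ← Finsupp.add_apply, hx]
    have h4 := hf _ h1 i
    have h5 := hg _ h2 i
    omega
  have k1 : x.1 = d := Finsupp.ext fun i => (key i).1
  have k2 : x.2 = e := Finsupp.ext fun i => (key i).2
  rw [Prod.ext_iff]
  exact ⟨k1, k2⟩

lemma bdd_prod {ι : Type*} (s : Finset ι) (f : ι → MvPolynomial (Fin m) ℝ)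
    (d : ι → (Fin m →₀ ℕ)) (h : ∀ i ∈ s, Bdd (f i) (d i)) :
    Bdd (∏ i ∈ s, f i) (∑ i ∈ s, d i) ∧
      coeff (∑ i ∈ s, d i) (∏ i ∈ s, f i) = ∏ i ∈ s, coeff (d i) (f i) := by
  classical
  induction s using Finset.induction with
  | empty =>
    constructor
    · intro β hβ i
      have : β = 0 := by
        by_contra hb
        simp [coeff_one, Ne.symm hb] at hβ
      simp [this]
    · simp
  | @insert a s' hx ih =>
    obtain ⟨ihb, ihc⟩ := ih (fun i hi => h i (Finset.mem_insert_of_mem hi))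
    have ha := h a (Finset.mem_insert_self a s')
    simp only [Finset.prod_insert hx, Finset.sum_insert hx]
    exact ⟨bdd_mul ha ihb, by rw [coeff_mul_bdd ha ihb, ihc]⟩

lemma bdd_factor (i : Fin m) (c : ℝ) : Bdd (X i - C c) (Finsupp.single i 1) := by
  intro β hβ k
  rw [coeff_sub, coeff_X', coeff_C] at hβ
  by_cases h1 : Finsupp.single i 1 = β
  · rw [← h1]
  · by_cases h2 : β = 0
    · simp [h2]
    · simp [h1, Ne.symm h2] at hβ

lemma coeff_factor (i : Fin m) (c : ℝ) :
    coeff (Finsupp.single i 1) (X i - C c) = 1 := by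
  rw [coeff_sub, coeff_X', coeff_C]
  have : (Finsupp.single i 1 : Fin m →₀ ℕ) ≠ 0 := by
    simp [Finsupp.single_eq_zero]
  simp [Ne.symm this]

lemma sum_single_eq_toF (α : Fin m → ℕ) :
    ∑ i : Fin m, Finsupp.single i (α i) = toF α := by
  ext k
  rw [Finset.sum_apply']
  simp [Finsupp.single_apply, Finset.sum_ite_eq']

lemma newton_bdd (p : Fin m → ℕ → ℝ) (α : Fin m → ℕ) :
    Bdd (newton p α) (toF α) ∧ coeff (toF α) (newton p α) = 1 := by
  have inner : ∀ i : Fin m,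
      Bdd (∏ j ∈ Finset.range (α i), (X i - C (p i j))) (Finsupp.single i (α i)) ∧
      coeff (Finsupp.single i (α i)) (∏ j ∈ Finset.range (α i), (X i - C (p i j))) = 1 := by
    intro i
    have := bdd_prod (Finset.range (α i)) (fun j => X i - C (p i j))
      (fun _ => Finsupp.single i 1) (fun j _ => bdd_factor i (p i j))
    have hs : (∑ _j ∈ Finset.range (α i), Finsupp.single i (1 : ℕ))
        = Finsupp.single i (α i) := by
      ext k
      rw [Finset.sum_apply']
      by_cases h : i = k <;> simp [Finsupp.single_apply, h]
    constructor
    · have hb := this.1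
      rwa [hs] at hb
    · have hc := this.2
      rw [hs] at hc
      rw [hc]
      exact Finset.prod_eq_one fun j _ => coeff_factor i (p i j)
  have := bdd_prod (Finset.univ : Finset (Fin m))
    (fun i => ∏ j ∈ Finset.range (α i), (X i - C (p i j)))
    (fun i => Finsupp.single i (α i)) (fun i _ => (inner i).1)
  rw [sum_single_eq_toF] at this
  refine ⟨this.1, ?_⟩
  rw [newton, this.2]
  exact Finset.prod_eq_one fun i _ => (inner i).2

lemma prod_X_pow_eq (g : Fin m → ℕ) :
    (∏ i, X (R := ℝ) i ^ g i) = monomial (toF g) 1 := by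
  have h0 : (∏ i, X (R := ℝ) i ^ g i) = ∏ i, X i ^ (toF g) i := rfl
  rw [h0, monomial_eq, C_1, one_mul, Finsupp.prod]
  refine (Finset.prod_subset (Finset.subset_univ _) ?_).symm
  intro i _ hi
  rw [Finsupp.notMem_support_iff.mp hi, pow_zero]

lemma mem_PiA_of_bdd {A : Finset (Fin m → ℕ)} (hA : CompleteIdx A)
    {f : MvPolynomial (Fin m) ℝ} {α : Fin m → ℕ} (hα : α ∈ A)
    (hf : Bdd f (toF α)) : f ∈ PiA m A := by
  rw [as_sum f]
  refine Submodule.sum_mem _ fun β hβ => ?_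
  have hco : coeff β f ≠ 0 := mem_support_iff.mp hβ
  have hβA : (β : Fin m → ℕ) ∈ A := hA α hα β (fun i => by simpa using hf β hco i)
  have hmono : monomial β (coeff β f) = (coeff β f) • monomial β 1 := by
    rw [smul_monomial, smul_eq_mul, mul_one]
  rw [hmono]
  refine Submodule.smul_mem _ _ (Submodule.subset_span ⟨β, hβA, ?_⟩)
  show (∏ i, X (R := ℝ) i ^ β i) = monomial β 1
  rw [prod_X_pow_eq, show toF (⇑β) = β from Finsupp.equivFunOnFinite_symm_coe β]

lemma mono_mem_span {A : Finset (Fin m → ℕ)} (hA : CompleteIdx A)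
    (p : Fin m → ℕ → ℝ) :
    ∀ n : ℕ, ∀ α ∈ A, (∑ i, α i) < n →
      (monomial (toF α) (1 : ℝ)) ∈
        Submodule.span ℝ (Set.range fun α : {α // α ∈ A} => newton p ↑α) := by
  intro n
  induction n with
  | zero => intro α _ h; omega
  | succ n ih =>
    intro α hα hdeg
    obtain ⟨hb, hc⟩ := newton_bdd p α
    have hN : newton p α ∈
        Submodule.span ℝ (Set.range fun α : {α // α ∈ A} => newton p ↑α) :=
      Submodule.subset_span ⟨⟨α, hα⟩, rfl⟩
    have key : monomial (toF α) (1 : ℝ) =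
        newton p α - (newton p α - monomial (toF α) 1) := by ring
    rw [key]
    refine Submodule.sub_mem _ hN ?_
    set R := newton p α - monomial (toF α) (1 : ℝ) with hR
    have hRco : ∀ β : Fin m →₀ ℕ, coeff β R ≠ 0 →
        (∀ i, β i ≤ α i) ∧ β ≠ toF α := by
      intro β hco
      by_cases hbe : β = toF α
      · exfalso; apply hco
        rw [hR, coeff_sub, hbe, hc, coeff_monomial, if_pos rfl, sub_self]
      · have hcN : coeff β (newton p α) ≠ 0 := by
          intro h0
          apply hco
          rw [hR, coeff_sub, h0, coeff_monomial, if_neg (fun h => hbe h.symm), sub_zero]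
        exact ⟨fun i => by simpa using hb β hcN i, hbe⟩
    rw [as_sum R]
    refine Submodule.sum_mem _ fun β hβ => ?_
    have hco : coeff β R ≠ 0 := mem_support_iff.mp hβ
    obtain ⟨hle, hne⟩ := hRco β hco
    have hβA : (β : Fin m → ℕ) ∈ A := hA α hα β hle
    have hlt : (∑ i, (β : Fin m → ℕ) i) < n := by
      have hstrict : ∑ i, (β : Fin m → ℕ) i < ∑ i, α i := by
        refine Finset.sum_lt_sum (fun i _ => hle i) ?_
        by_contra hall
        push_neg at hall
        apply hne
        ext i
        have h1 := hle i
        have h2 := hall i (Finset.mem_univ i)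
        simp only [toF_apply]
        omega
      omega
    have hmem := ih (β : Fin m → ℕ) hβA hlt
    rw [show toF ((β : Fin m → ℕ)) = β from Finsupp.equivFunOnFinite_symm_coe β] at hmem
    have hmono : monomial β (coeff β R) = (coeff β R) • monomial β 1 := by
      rw [smul_monomial, smul_eq_mul, mul_one]
    rw [hmono]
    exact Submodule.smul_mem _ _ hmem

end NewtonAux

open NewtonAux

/-- (Newton basis.) Under the essential assumptions, the multivariate
Newton polynomials `{N_α}_{α∈A}` form a basis of `Π_A`: they are linearly independent
and span `Π_A`. -/
theorem newton_basis (m : ℕ) (A : Finset (Fin m → ℕ))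
    (hA : CompleteIdx A) (p : Fin m → ℕ → ℝ) (hp : GenDistinct A p) :
    LinearIndependent ℝ (fun α : {α // α ∈ A} => newton p ↑α) ∧
    Submodule.span ℝ (Set.range fun α : {α // α ∈ A} => newton p ↑α) = PiA m A := by
  have hspan : Submodule.span ℝ (Set.range fun α : {α // α ∈ A} => newton p ↑α)
      = PiA m A := by
    apply le_antisymm
    · rw [Submodule.span_le]
      rintro _ ⟨⟨α, hα⟩, rfl⟩
      exact mem_PiA_of_bdd hA hα (newton_bdd p α).1
    · rw [PiA, Submodule.span_le]
      rintro _ ⟨α, hα, rfl⟩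
      show (∏ i, X (R := ℝ) i ^ α i) ∈ _
      rw [prod_X_pow_eq]
      exact mono_mem_span hA p ((∑ i, α i) + 1) α hα (Nat.lt_succ_self _)
  refine ⟨?_, hspan⟩
  -- dimension count
  have hmono_li : LinearIndependent ℝ
      (fun α : {α // α ∈ A} => monomial (toF (α : Fin m → ℕ)) (1 : ℝ)) := by
    have hb := (MvPolynomial.basisMonomials (Fin m) ℝ).linearIndependent
    have hinj : Function.Injective
        (fun α : {α // α ∈ A} => toF (α : Fin m → ℕ)) := by
      intro a b hab
      apply Subtype.ext
      exact Finsupp.equivFunOnFinite.symm.injective hab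
    have := hb.comp _ hinj
    rw [MvPolynomial.coe_basisMonomials] at this
    exact this
  have hmono_span : Submodule.span ℝ
      (Set.range fun α : {α // α ∈ A} => monomial (toF (α : Fin m → ℕ)) (1 : ℝ))
      = PiA m A := by
    rw [PiA]
    congr 1
    ext f
    constructor
    · rintro ⟨α, rfl⟩
      exact ⟨(α : Fin m → ℕ), α.2, (prod_X_pow_eq _)⟩
    · rintro ⟨α, hα, rfl⟩
      exact ⟨⟨α, hα⟩, (prod_X_pow_eq _).symm⟩
  rw [linearIndependent_iff_card_eq_finrank_span]
  rw [Set.finrank, hspan, ← hmono_span]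
  exact (finrank_span_eq_card hmono_li).symm

end
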